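/- arXiv:2003.12574 — 7 statements merged into one kernel-verified Lean document; each statement's English description precedes it below -/
import Mathlib

section
/- If a Riemannian manifold (M,g) is an almost η-Ricci soliton (V,λ,μ) whose potential vector field V is torqued, i.e. ∇_X V = a X + ψ(X) V with ψ(V) = 0, and η is the g-dual 1-form of V, then Ric = (λ − a) g + μ η⊗η − (1/2)(ψ⊗η + η⊗ψ); in particular, M is a mixed generalized quasi-Einstein manifold with associated functions (λ − a), μ, 0 and −1/2 relative to the 1-forms η and ψ, whose g-dual vector fields V and U are g-orthogonal. -/
/-!
Abstract model of the geometric data of an `n`-dimensional Riemannian manifold: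
`M` is the set of points, `VF` is the space of (smooth) vector fields, and smooth
real-valued functions on `M` are modelled as elements of `M → ℝ`.  The structure
records the metric, the directional derivative, the Lie bracket, the Levi-Civita
connection, the Ricci tensor, the scalar curvature and a pointwise orthonormal
frame, together with their standard defining properties.
-/
structure RiemannianSetting (n : ℕ) (M : Type) (VF : Type)
    [AddCommGroup VF] [Module ℝ VF] : Type where
  /-- multiplication of a vector field by a smooth function -/
  fsmul : (M → ℝ) → VF → VF
  /-- derivative of a function in the direction of a vector field -/
  dd : VF → (M → ℝ) → M → ℝ
  /-- the Riemannian metric -/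
  g : VF → VF → M → ℝ
  /-- the Lie bracket of vector fields -/
  bracket : VF → VF → VF
  /-- the Levi-Civita connection -/
  conn : VF → VF → VF
  /-- the Ricci curvature tensor field -/
  ric : VF → VF → M → ℝ
  /-- the scalar curvature -/
  scal : M → ℝ
  /-- a pointwise orthonormal frame -/
  frame : M → Fin n → VF
  g_symm : ∀ X Y, g X Y = g Y X
  g_add_left : ∀ X Y Z, g (X + Y) Z = g X Z + g Y Z
  g_smul_left : ∀ (r : ℝ) (X Y : VF), g (r • X) Y = r • g X Y
  g_fsmul_left : ∀ f X Y, g (fsmul f X) Y = f * g X Y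
  g_nonneg : ∀ X p, 0 ≤ g X X p
  fsmul_one : ∀ X, fsmul (fun _ => 1) X = X
  fsmul_add : ∀ f X Y, fsmul f (X + Y) = fsmul f X + fsmul f Y
  fsmul_add' : ∀ f₁ f₂ X, fsmul (f₁ + f₂) X = fsmul f₁ X + fsmul f₂ X
  dd_add : ∀ X f₁ f₂, dd X (f₁ + f₂) = dd X f₁ + dd X f₂
  dd_mul : ∀ X f₁ f₂, dd X (f₁ * f₂) = dd X f₁ * f₂ + f₁ * dd X f₂
  conn_add_left : ∀ X Y Z, conn (X + Y) Z = conn X Z + conn Y Z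
  conn_add_right : ∀ X Y Z, conn X (Y + Z) = conn X Y + conn X Z
  conn_fsmul_left : ∀ f X Y, conn (fsmul f X) Y = fsmul f (conn X Y)
  conn_leibniz : ∀ f X Y, conn X (fsmul f Y) = fsmul (dd X f) Y + fsmul f (conn X Y)
  conn_metric : ∀ X Y Z, dd X (g Y Z) = g (conn X Y) Z + g Y (conn X Z)
  torsion_free : ∀ X Y, conn X Y - conn Y X = bracket X Y
  frame_orthonormal : ∀ p i j, g (frame p i) (frame p j) p = if i = j then 1 else 0
  ric_trace : ∀ X Y p, ric X Y p = ∑ i : Fin n,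
      g (conn (frame p i) (conn X Y) - conn X (conn (frame p i) Y)
          - conn (bracket (frame p i) X) Y) (frame p i) p
  scal_trace : ∀ p, scal p = ∑ i : Fin n, ric (frame p i) (frame p i) p
  ric_symm : ∀ X Y, ric X Y = ric Y X

namespace RiemannianSetting

variable {n : ℕ} {M VF : Type} [AddCommGroup VF] [Module ℝ VF]

/-- The Lie derivative of the metric along `V`:
`(£_V g)(X,Y) = g(∇_X V, Y) + g(∇_Y V, X)`. -/
def lieg (G : RiemannianSetting n M VF) (V X Y : VF) : M → ℝ :=
  G.g (G.conn X V) Y + G.g (G.conn Y V) X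

/-- The `g`-dual `1`-form of a vector field `V`. -/
def dual (G : RiemannianSetting n M VF) (V X : VF) : M → ℝ := G.g V X

/-- The squared norm `|V|²` of a vector field. -/
def nsq (G : RiemannianSetting n M VF) (V : VF) : M → ℝ := G.g V V

/-- `X` is the gradient of `f`:  `g(X, Y) = Y(f)` for every vector field `Y`. -/
def IsGradient (G : RiemannianSetting n M VF) (f : M → ℝ) (X : VF) : Prop :=
  ∀ Y, G.g X Y = G.dd Y f

/-- A nowhere vanishing vector field. -/
def NowhereZero (G : RiemannianSetting n M VF) (V : VF) : Prop := ∀ p, G.g V V p ≠ 0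

/-- `(V, lam, mu)` is an almost `η`-Ricci soliton:
`(1/2) £_V g + Ric = λ g + μ η ⊗ η`. -/
def IsEtaRicciSoliton (G : RiemannianSetting n M VF) (V : VF) (lam mu : M → ℝ)
    (eta : VF → M → ℝ) : Prop :=
  ∀ X Y, (1 / 2 : ℝ) • G.lieg V X Y + G.ric X Y = lam * G.g X Y + mu * eta X * eta Y

/-- `(V, lam)` is an almost Ricci soliton: `(1/2) £_V g + Ric = λ g`. -/
def IsRicciSoliton (G : RiemannianSetting n M VF) (V : VF) (lam : M → ℝ) : Prop :=
  ∀ X Y, (1 / 2 : ℝ) • G.lieg V X Y + G.ric X Y = lam * G.g X Y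

/-- `(V, lam, mu)` is an almost `η`-Yamabe soliton:
`(1/2) £_V g = (scal − λ) g + μ η ⊗ η`. -/
def IsEtaYamabeSoliton (G : RiemannianSetting n M VF) (V : VF) (lam mu : M → ℝ)
    (eta : VF → M → ℝ) : Prop :=
  ∀ X Y, (1 / 2 : ℝ) • G.lieg V X Y = (G.scal - lam) * G.g X Y + mu * eta X * eta Y

/-- `V` is torse-forming: `∇_X V = a X + ψ(X) V` for every vector field `X`. -/
def IsTorseForming (G : RiemannianSetting n M VF) (V : VF) (a : M → ℝ)
    (psi : VF → M → ℝ) : Prop :=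
  ∀ X, G.conn X V = G.fsmul a X + G.fsmul (psi X) V

end RiemannianSetting

/-- If a Riemannian manifold `(M,g)` is an almost `η`-Ricci soliton
`(V, λ, μ)` whose potential vector field `V` is torqued, i.e.
`∇_X V = a X + ψ(X) V` with `ψ(V) = 0`, and `η` is the `g`-dual `1`-form of `V`, then
`Ric = (λ − a) g + μ η ⊗ η − (1/2)(ψ ⊗ η + η ⊗ ψ)`; in particular, `M` is a mixed
generalized quasi-Einstein manifold with associated functions `(λ − a)`, `μ`, `0`
and `−1/2` relative to the `1`-forms `η` and `ψ`, whose `g`-dual vector fields `V`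
and `U` are `g`-orthogonal. -/
theorem mixed_generalized_quasi_einstein_of_torqued_potential
    {n : ℕ} {M VF : Type} [AddCommGroup VF] [Module ℝ VF]
    (G : RiemannianSetting n M VF) (V U : VF) (lam mu a : M → ℝ)
    (psi : VF → M → ℝ)
    (htf : G.IsTorseForming V a psi)
    (htorqued : psi V = 0)
    (hU : ∀ X, G.g U X = psi X)
    (hsol : G.IsEtaRicciSoliton V lam mu (G.dual V)) :
    (∀ X Y p, G.ric X Y p =
        (lam p - a p) * G.g X Y p + mu p * G.dual V X p * G.dual V Y p
          + 0 * psi X p * psi Y p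
          + (-(1 / 2 : ℝ)) * (G.dual V X p * psi Y p + psi X p * G.dual V Y p)) ∧
    G.g V U = 0 := by
  constructor
  · intro X Y p
    have h1 : G.lieg V X Y = a * G.g X Y + psi X * G.g V Y
        + (a * G.g Y X + psi Y * G.g V X) := by
      unfold RiemannianSetting.lieg
      rw [htf X, htf Y, G.g_add_left, G.g_add_left, G.g_fsmul_left, G.g_fsmul_left,
        G.g_fsmul_left, G.g_fsmul_left]
    have hs := congrFun (hsol X Y) p
    have h1p := congrFun h1 p
    have hsym := congrFun (G.g_symm Y X) p
    simp only [RiemannianSetting.dual, Pi.add_apply, Pi.mul_apply, Pi.smul_apply,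
      smul_eq_mul] at hs h1p hsym ⊢
    rw [h1p, hsym] at hs
    have hsVX := congrFun (G.g_symm V X) p
    have hsVY := congrFun (G.g_symm V Y) p
    linarith
  · funext p
    have := congrFun (G.g_symm V U) p
    rw [this]
    have h2 := congrFun (hU V) p
    rw [h2, htorqued]
end

section
/- If a Riemannian manifold (M,g) is an almost η-Ricci soliton (V,λ,μ) whose potential vector field V = grad(σ) is torse-forming with ∇_X V = a X + δ dσ(X) V (equivalently, Hess(σ) = a g + δ dσ⊗dσ) for a smooth function σ on M, and η = dσ is the g-dual 1-form of V, then Ric = (λ − a) g + (μ − δ) dσ⊗dσ; that is, M is a quasi-Einstein manifold with associated functions (λ − a) and (μ − δ). -/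
/-- If a Riemannian manifold `(M,g)` is an almost `η`-Ricci soliton
`(V, λ, μ)` whose potential vector field `V = grad(σ)` is torse-forming with
`∇_X V = a X + δ dσ(X) V` for a smooth function `σ` on `M`, and `η = dσ` is the
`g`-dual `1`-form of `V`, then `Ric = (λ − a) g + (μ − δ) dσ ⊗ dσ`; that is, `M` is
quasi-Einstein with associated functions `(λ − a)` and `(μ − δ)`. -/
theorem quasi_einstein_of_gradient_torse_forming_potential
    {n : ℕ} {M VF : Type} [AddCommGroup VF] [Module ℝ VF]
    (G : RiemannianSetting n M VF) (V : VF) (lam mu a delta sigma : M → ℝ)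
    (hgrad : G.IsGradient sigma V)
    (htf : ∀ X : VF, G.conn X V = G.fsmul a X + G.fsmul (delta * G.dd X sigma) V)
    (hsol : G.IsEtaRicciSoliton V lam mu (fun X => G.dd X sigma)) :
    ∀ X Y p, G.ric X Y p =
      (lam p - a p) * G.g X Y p + (mu p - delta p) * G.dd X sigma p * G.dd Y sigma p := by
  intro X Y p
  have hlie : G.lieg V X Y p =
      2 * a p * G.g X Y p + 2 * delta p * G.dd X sigma p * G.dd Y sigma p := by
    have hVX : G.g V X = G.dd X sigma := hgrad X
    have hVY : G.g V Y = G.dd Y sigma := hgrad Y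
    simp only [RiemannianSetting.lieg, htf, G.g_add_left, G.g_fsmul_left,
      G.g_symm V X, G.g_symm V Y] at *
    simp only [Pi.add_apply, Pi.mul_apply, hVX, hVY, G.g_symm Y X]
    ring
  have h := congrFun (hsol X Y) p
  simp only [Pi.add_apply, Pi.mul_apply, Pi.smul_apply, smul_eq_mul] at h
  rw [hlie] at h
  linarith
end

section
/- If a Riemannian manifold (M,g) is an almost η-Ricci soliton (V, a, δ) whose potential vector field V = grad(σ) is torse-forming with ∇_X V = a X + δ dσ(X) V for a smooth function σ on M, and η = dσ is the g-dual 1-form of V (i.e. the soliton functions are λ = a and μ = δ), then M is a Ricci-flat manifold. -/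
/-- If a Riemannian manifold `(M,g)` is an almost `η`-Ricci soliton
`(V, a, δ)` whose potential vector field `V = grad(σ)` is torse-forming with
`∇_X V = a X + δ dσ(X) V` for a smooth function `σ` on `M`, and `η = dσ` is the
`g`-dual `1`-form of `V` (i.e. the soliton functions are `λ = a` and `μ = δ`),
then `M` is a Ricci-flat manifold. -/
theorem ricci_flat_of_gradient_torse_forming_potential
    {n : ℕ} {M VF : Type} [AddCommGroup VF] [Module ℝ VF]
    (G : RiemannianSetting n M VF) (V : VF) (a delta sigma : M → ℝ)
    (hgrad : G.IsGradient sigma V)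
    (htf : ∀ X : VF, G.conn X V = G.fsmul a X + G.fsmul (delta * G.dd X sigma) V)
    (hsol : G.IsEtaRicciSoliton V a delta (fun X => G.dd X sigma)) :
    ∀ X Y : VF, G.ric X Y = 0 := by
  intro X Y
  have h := hsol X Y
  have hX : G.g (G.conn X V) Y = a * G.g X Y + delta * G.dd X sigma * G.dd Y sigma := by
    rw [htf X, G.g_add_left, G.g_fsmul_left, G.g_fsmul_left, hgrad Y]
  have hY : G.g (G.conn Y V) X = a * G.g X Y + delta * G.dd X sigma * G.dd Y sigma := by
    rw [htf Y, G.g_add_left, G.g_fsmul_left, G.g_fsmul_left, hgrad X, G.g_symm Y X]; ring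
  have hl : G.lieg V X Y = 2 * (a * G.g X Y + delta * G.dd X sigma * G.dd Y sigma) := by
    unfold RiemannianSetting.lieg
    rw [hX, hY]; ring
  rw [hl] at h
  funext p
  have hp := congrFun h p
  simp only [Pi.add_apply, Pi.mul_apply, Pi.smul_apply, Pi.ofNat_apply, smul_eq_mul,
    Pi.zero_apply] at hp ⊢
  linarith
end

section
/- Let (M,g) be an n-dimensional Riemannian manifold, let V be a nowhere vanishing torse-forming vector field on M with ∇_X V = a X + ψ(X) V, let η be the g-dual 1-form of V and let U be the g-dual vector field of ψ. If (V,λ,μ) is an almost η-Yamabe soliton on (M,g), then either μ = 0, in which case (V,λ) is an almost Yamabe soliton with λ = scal − V(|V|²)/(2|V|²), or (ψ(V))² = |V|²·|U|². -/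
/-- Let `(M,g)` be an `n`-dimensional Riemannian manifold, `V` a
nowhere vanishing torse-forming vector field, `∇_X V = a X + ψ(X) V`, `η` the
`g`-dual `1`-form of `V` and `U` the `g`-dual vector field of `ψ`.  If `(V, λ, μ)`
is an almost `η`-Yamabe soliton on `(M,g)`, then either `μ = 0`, in which case
`(V, λ)` is an almost Yamabe soliton with `λ = scal − V(|V|²)/(2|V|²)`, or
`(ψ(V))² = |V|² |U|²`. -/
theorem almost_eta_yamabe_soliton_torse_forming_dichotomy
    {n : ℕ} {M VF : Type} [AddCommGroup VF] [Module ℝ VF]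
    (G : RiemannianSetting n M VF) (V U : VF) (lam mu a : M → ℝ)
    (psi : VF → M → ℝ)
    (hV : G.NowhereZero V)
    (htf : G.IsTorseForming V a psi)
    (hU : ∀ X, G.g U X = psi X)
    (hsol : G.IsEtaYamabeSoliton V lam mu (G.dual V)) :
    ((∀ p, mu p = 0) ∧
      (∀ p, lam p = G.scal p - G.dd V (G.nsq V) p / (2 * G.nsq V p))) ∨
    (∀ p, (psi V p) ^ 2 = G.nsq V p * G.nsq U p) := by
  right
  have hc : ∀ X Y : VF, G.g (G.conn X V) Y = a * G.g X Y + psi X * G.g V Y := by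
    intro X Y
    rw [htf X, G.g_add_left, G.g_fsmul_left, G.g_fsmul_left]
  have key : ∀ X Y : VF, ∀ p : M,
      (1 / 2 : ℝ) * (a p * G.g X Y p + psi X p * G.g V Y p
        + (a p * G.g Y X p + psi Y p * G.g V X p))
      = (G.scal p - lam p) * G.g X Y p + mu p * G.g V X p * G.g V Y p := by
    intro X Y p
    have h := congrFun (hsol X Y) p
    simp only [RiemannianSetting.lieg, RiemannianSetting.dual, hc, Pi.add_apply,
      Pi.mul_apply, Pi.sub_apply, Pi.smul_apply, smul_eq_mul] at h
    linarith
  intro p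
  have e1 := key V V p
  have e2 := key U V p
  have hUV : G.g U V p = psi V p := congrFun (hU V) p
  have hVU : G.g V U p = psi V p := by rw [G.g_symm]; exact hUV
  have hUU : psi U p = G.g U U p := (congrFun (hU U) p).symm
  rw [hUV, hVU, hUU] at e2
  have hz : G.g V V p * (psi V p ^ 2 - G.g V V p * G.g U U p) = 0 := by
    linear_combination 2 * psi V p * e1 - 2 * G.g V V p * e2
  have := (mul_eq_zero.mp hz).resolve_left (hV p)
  simp only [RiemannianSetting.nsq]
  linarith
end

section
/- Let M be a submanifold isometrically immersed into a Riemannian manifold (M̃,g̃) with induced metric g and second fundamental form h, let V be a torse-forming vector field on M̃ with ∇̃_X V = a X + ψ(X) V, and let η be the g-dual 1-form of the tangential component V^T of V. Then (M,g) is an almost η-Ricci soliton (V^T,λ,μ) if and only if the Ricci tensor of M satisfies Ric_M(X,Y) = (λ − a) g(X,Y) − g̃(h(X,Y), V^⊥) + μ η(X)η(Y) − (1/2)[ψ(X)η(Y) + η(X)ψ(Y)] for all vector fields X, Y tangent to M. -/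
/-- Abstract data of a submanifold `M` isometrically immersed into a Riemannian
manifold `(M̃, g̃)`:  `VF` is the space of vector fields tangent to `M`, `W` is the
space of vector fields of `M̃` restricted along `M`, `gt` is the ambient metric,
`incl` the inclusion of tangent fields, `tang` the tangential projection, `Dconn`
the ambient Levi-Civita connection along tangent directions, and `sff` the second
fundamental form (the Gauss formula `∇̃_X Y = ∇_X Y + h(X,Y)` holds). -/
structure SubmanifoldSetting (n : ℕ) (M : Type) (VF W : Type)
    [AddCommGroup VF] [Module ℝ VF] [AddCommGroup W] [Module ℝ W] extends
    RiemannianSetting n M VF where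
  /-- the ambient metric along `M` -/
  gt : W → W → M → ℝ
  /-- multiplication of an ambient field by a function -/
  fsmulW : (M → ℝ) → W → W
  /-- inclusion of tangent vector fields into ambient vector fields -/
  incl : VF →ₗ[ℝ] W
  /-- tangential projection -/
  tang : W →ₗ[ℝ] VF
  /-- the ambient Levi-Civita connection along tangent directions of `M` -/
  Dconn : VF → W → W
  /-- the second fundamental form `h` -/
  sff : VF → VF → W
  gt_symm : ∀ v w, gt v w = gt w v
  gt_add_left : ∀ u v w, gt (u + v) w = gt u w + gt v w
  gt_fsmul_left : ∀ f v w, gt (fsmulW f v) w = f * gt v w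
  /-- the metric of `M` is induced by the ambient metric -/
  g_induced : ∀ X Y, g X Y = gt (incl X) (incl Y)
  tang_incl : ∀ X, tang (incl X) = X
  /-- the normal component `w − (tang w)` is `g̃`-orthogonal to `M` -/
  tang_proj : ∀ w X, gt (w - incl (tang w)) (incl X) = 0
  /-- the Gauss formula `∇̃_X Y = ∇_X Y + h(X, Y)` -/
  gauss : ∀ X Y, Dconn X (incl Y) = incl (conn X Y) + sff X Y
  sff_symm : ∀ X Y, sff X Y = sff Y X
  /-- the second fundamental form is normal-valued -/
  sff_normal : ∀ X Y Z, gt (sff X Y) (incl Z) = 0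
  Dconn_add : ∀ X v w, Dconn X (v + w) = Dconn X v + Dconn X w
  Dconn_metric : ∀ X v w, dd X (gt v w) = gt (Dconn X v) w + gt v (Dconn X w)

namespace SubmanifoldSetting

variable {n : ℕ} {M VF W : Type} [AddCommGroup VF] [Module ℝ VF]
  [AddCommGroup W] [Module ℝ W]

/-- the normal component `V^⊥` of an ambient vector field along `M` -/
def nor (S : SubmanifoldSetting n M VF W) (w : W) : W := w - S.incl (S.tang w)

end SubmanifoldSetting

/-- Let `M` be a submanifold isometrically immersed into a
Riemannian manifold `(M̃, g̃)` with induced metric `g` and second fundamental form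
`h`, let `V` be a torse-forming vector field on `M̃` (`∇̃_X V = a X + ψ(X) V`), and
let `η` be the `g`-dual `1`-form of the tangential component `V^T` of `V`.  Then
`(M,g)` is an almost `η`-Ricci soliton `(V^T, λ, μ)` if and only if
`Ric_M(X,Y) = (λ − a) g(X,Y) − g̃(h(X,Y), V^⊥) + μ η(X)η(Y)
  − (1/2)[ψ(X)η(Y) + η(X)ψ(Y)]` for all `X, Y` tangent to `M`. -/
theorem submanifold_almost_eta_ricci_soliton_iff
    {n : ℕ} {M VF W : Type} [AddCommGroup VF] [Module ℝ VF]
    [AddCommGroup W] [Module ℝ W]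
    (S : SubmanifoldSetting n M VF W) (V : W) (lam mu a : M → ℝ)
    (psi : VF → M → ℝ)
    (htf : ∀ X : VF, S.Dconn X V = S.fsmulW a (S.incl X) + S.fsmulW (psi X) V) :
    S.toRiemannianSetting.IsEtaRicciSoliton (S.tang V) lam mu
        (S.toRiemannianSetting.dual (S.tang V)) ↔
      ∀ X Y p, S.ric X Y p =
        (lam p - a p) * S.g X Y p - S.gt (S.sff X Y) (S.nor V) p
          + mu p * S.toRiemannianSetting.dual (S.tang V) X p
              * S.toRiemannianSetting.dual (S.tang V) Y p
          - (1 / 2 : ℝ) * (psi X p * S.toRiemannianSetting.dual (S.tang V) Y p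
              + S.toRiemannianSetting.dual (S.tang V) X p * psi Y p) := by
  have dd_zero : ∀ X : VF, S.dd X 0 = 0 := by
    intro X
    have h : S.dd X 0 = S.dd X 0 + S.dd X 0 := by
      have := S.dd_add X 0 0; simpa using this
    have := left_eq_add.mp h
    exact this
  have gt_add_right : ∀ (u v w : W), S.gt u (v + w) = S.gt u v + S.gt u w := by
    intro u v w
    rw [S.gt_symm, S.gt_add_left, S.gt_symm v u, S.gt_symm w u]
  have hnor : S.nor V = V - S.incl (S.tang V) := rfl
  have hV : S.incl (S.tang V) + S.nor V = V := by rw [hnor]; abel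
  -- η(Y) = g̃(V, incl Y)
  have eta_eq : ∀ Y : VF, S.gt V (S.incl Y) =
      S.toRiemannianSetting.dual (S.tang V) Y := by
    intro Y
    have h1 := S.gt_add_left (S.incl (S.tang V)) (S.nor V) (S.incl Y)
    rw [hV] at h1
    have hz : S.gt (S.nor V) (S.incl Y) = 0 := S.tang_proj V Y
    rw [h1, hz, add_zero, ← S.g_induced]
    rfl
  -- Key formula: g(∇_X V^T, Y) = a g(X,Y) + ψ(X) η(Y) + g̃(h(X,Y), V^⊥)
  have key : ∀ (X Y : VF),
      S.g (S.conn X (S.tang V)) Y =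
        a * S.g X Y + psi X * S.toRiemannianSetting.dual (S.tang V) Y
          + S.gt (S.sff X Y) (S.nor V) := by
    intro X Y
    -- g̃(∇̃_X (incl V^T), incl Y) = g(∇_X V^T, Y)
    have e1 : S.gt (S.Dconn X (S.incl (S.tang V))) (S.incl Y)
        = S.g (S.conn X (S.tang V)) Y := by
      rw [S.gauss, S.gt_add_left, S.sff_normal, add_zero, ← S.g_induced]
    -- ∇̃_X V = ∇̃_X (incl V^T) + ∇̃_X V^⊥
    have e2 : S.Dconn X V = S.Dconn X (S.incl (S.tang V)) + S.Dconn X (S.nor V) := by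
      rw [← S.Dconn_add, hV]
    -- g̃(∇̃_X V, incl Y) = a g(X,Y) + ψ(X) η(Y)
    have e3 : S.gt (S.Dconn X V) (S.incl Y)
        = a * S.g X Y + psi X * S.toRiemannianSetting.dual (S.tang V) Y := by
      rw [htf X, S.gt_add_left, S.gt_fsmul_left, S.gt_fsmul_left, ← S.g_induced,
        eta_eq]
    -- g̃(∇̃_X V^⊥, incl Y) = − g̃(h(X,Y), V^⊥)
    have e4 : S.gt (S.Dconn X (S.nor V)) (S.incl Y) = -(S.gt (S.sff X Y) (S.nor V)) := by
      have m := S.Dconn_metric X (S.nor V) (S.incl Y)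
      have hz : S.gt (S.nor V) (S.incl Y) = 0 := S.tang_proj V Y
      rw [hz, dd_zero] at m
      have e5 : S.gt (S.nor V) (S.Dconn X (S.incl Y))
          = S.gt (S.sff X Y) (S.nor V) := by
        rw [S.gauss, gt_add_right]
        have hz2 : S.gt (S.nor V) (S.incl (S.conn X Y)) = 0 :=
          S.tang_proj V (S.conn X Y)
        rw [hz2, zero_add, S.gt_symm]
      rw [e5] at m
      funext p
      have := congrFun m p
      simp only [Pi.add_apply, Pi.zero_apply, Pi.neg_apply] at this ⊢
      linarith
    have comb : S.gt (S.Dconn X V) (S.incl Y)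
        = S.g (S.conn X (S.tang V)) Y + -(S.gt (S.sff X Y) (S.nor V)) := by
      rw [e2, S.gt_add_left, e1, e4]
    rw [e3] at comb
    funext p
    have := congrFun comb p
    simp only [Pi.add_apply, Pi.mul_apply, Pi.neg_apply] at this ⊢
    linarith
  constructor
  · intro H X Y p
    have hA := congrFun (H X Y) p
    simp only [RiemannianSetting.IsEtaRicciSoliton, RiemannianSetting.lieg,
      Pi.add_apply, Pi.smul_apply, Pi.mul_apply, smul_eq_mul] at hA
    have k1 := congrFun (key X Y) p
    have k2 := congrFun (key Y X) p
    have hs : S.gt (S.sff Y X) (S.nor V) p = S.gt (S.sff X Y) (S.nor V) p := by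
      rw [S.sff_symm]
    have hg : S.g Y X p = S.g X Y p := by rw [S.g_symm]
    simp only [Pi.add_apply, Pi.mul_apply] at k1 k2
    rw [hs, hg] at k2
    linarith
  · intro H X Y
    funext p
    have hB := H X Y p
    have k1 := congrFun (key X Y) p
    have k2 := congrFun (key Y X) p
    have hs : S.gt (S.sff Y X) (S.nor V) p = S.gt (S.sff X Y) (S.nor V) p := by
      rw [S.sff_symm]
    have hg : S.g Y X p = S.g X Y p := by rw [S.g_symm]
    simp only [Pi.add_apply, Pi.mul_apply] at k1 k2
    rw [hs, hg] at k2
    simp only [RiemannianSetting.lieg, Pi.add_apply, Pi.smul_apply, Pi.mul_apply,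
      smul_eq_mul]
    linarith
end

section
/- Let M be a submanifold isometrically immersed into a Riemannian manifold (M̃,g̃) with induced metric g and second fundamental form h, let V be a torse-forming vector field on M̃ with ∇̃_X V = a X + ψ(X) V, and let η be the g-dual 1-form of the tangential component V^T of V. Then (M,g) is an almost η-Yamabe soliton (V^T,λ,μ) if and only if (scal − λ − a) g(X,Y) − g̃(h(X,Y), V^⊥) + μ η(X)η(Y) − (1/2)[ψ(X)η(Y) + η(X)ψ(Y)] = 0 for all vector fields X, Y tangent to M, where scal is the scalar curvature of (M,g). -/
/-- Let `M` be a submanifold isometrically immersed into a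
Riemannian manifold `(M̃, g̃)` with induced metric `g` and second fundamental form
`h`, let `V` be a torse-forming vector field on `M̃` (`∇̃_X V = a X + ψ(X) V`), and
let `η` be the `g`-dual `1`-form of the tangential component `V^T` of `V`.  Then
`(M,g)` is an almost `η`-Yamabe soliton `(V^T, λ, μ)` if and only if
`(scal − λ − a) g(X,Y) − g̃(h(X,Y), V^⊥) + μ η(X)η(Y)
  − (1/2)[ψ(X)η(Y) + η(X)ψ(Y)] = 0` for all `X, Y` tangent to `M`. -/
theorem submanifold_almost_eta_yamabe_soliton_iff
    {n : ℕ} {M VF W : Type} [AddCommGroup VF] [Module ℝ VF]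
    [AddCommGroup W] [Module ℝ W]
    (S : SubmanifoldSetting n M VF W) (V : W) (lam mu a : M → ℝ)
    (psi : VF → M → ℝ)
    (htf : ∀ X : VF, S.Dconn X V = S.fsmulW a (S.incl X) + S.fsmulW (psi X) V) :
    S.toRiemannianSetting.IsEtaYamabeSoliton (S.tang V) lam mu
        (S.toRiemannianSetting.dual (S.tang V)) ↔
      ∀ X Y p,
        (S.scal p - lam p - a p) * S.g X Y p - S.gt (S.sff X Y) (S.nor V) p
          + mu p * S.toRiemannianSetting.dual (S.tang V) X p
              * S.toRiemannianSetting.dual (S.tang V) Y p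
          - (1 / 2 : ℝ) * (psi X p * S.toRiemannianSetting.dual (S.tang V) Y p
              + S.toRiemannianSetting.dual (S.tang V) X p * psi Y p) = 0 := by
  have gt_add_right : ∀ (C A B : W), S.gt C (A + B) = S.gt C A + S.gt C B := by
    intro C A B
    rw [S.gt_symm, S.gt_add_left, S.gt_symm A C, S.gt_symm B C]
  have gt_sub_left : ∀ (A B C : W), S.gt (A - B) C = S.gt A C - S.gt B C := by
    intro A B C
    have h := S.gt_add_left (A - B) B C
    have e : A - B + B = A := by abel
    rw [e] at h
    exact eq_sub_of_add_eq h.symm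
  have hdd0 : ∀ X : VF, S.dd X (0 : M → ℝ) = 0 := by
    intro X
    have h := S.dd_add X 0 0
    rw [add_zero] at h
    funext p
    have h2 := congrFun h p
    simp only [Pi.add_apply, Pi.zero_apply] at h2 ⊢
    linarith
  have hnorZ : ∀ Z : VF, S.gt (S.nor V) (S.incl Z) = 0 := fun Z => S.tang_proj V Z
  have key : ∀ X Y : VF, S.g (S.conn X (S.tang V)) Y
      = a * S.g X Y + psi X * S.toRiemannianSetting.dual (S.tang V) Y
        + S.gt (S.sff X Y) (S.nor V) := by
    intro X Y
    have hDnor : S.gt (S.Dconn X (S.nor V)) (S.incl Y)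
        = - S.gt (S.sff X Y) (S.nor V) := by
      have hm := S.Dconn_metric X (S.nor V) (S.incl Y)
      rw [hnorZ Y, hdd0, S.gauss X Y, gt_add_right, hnorZ (S.conn X Y),
        S.gt_symm (S.nor V) (S.sff X Y)] at hm
      funext p
      have h2 := congrFun hm p
      simp only [Pi.add_apply, Pi.zero_apply, Pi.neg_apply] at h2 ⊢
      linarith
    have hVY : S.gt V (S.incl Y) = S.toRiemannianSetting.dual (S.tang V) Y := by
      have h1 := S.tang_proj V Y
      have h2 := S.gt_add_left (S.incl (S.tang V)) (V - S.incl (S.tang V)) (S.incl Y)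
      have e : S.incl (S.tang V) + (V - S.incl (S.tang V)) = V := by abel
      rw [e, h1, add_zero] at h2
      rw [RiemannianSetting.dual, S.g_induced]
      exact h2
    have hDV : S.gt (S.Dconn X V) (S.incl Y)
        = a * S.g X Y + psi X * S.toRiemannianSetting.dual (S.tang V) Y := by
      rw [htf X, S.gt_add_left, S.gt_fsmul_left, S.gt_fsmul_left, ← S.g_induced, hVY]
    have hsplit : S.Dconn X (S.incl (S.tang V)) = S.Dconn X V - S.Dconn X (S.nor V) := by
      have h := S.Dconn_add X (S.incl (S.tang V)) (S.nor V)
      have e : S.incl (S.tang V) + S.nor V = V := by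
        simp only [SubmanifoldSetting.nor]; abel
      rw [e] at h
      exact eq_sub_of_add_eq h.symm
    have hgauss : S.gt (S.Dconn X (S.incl (S.tang V))) (S.incl Y)
        = S.gt (S.incl (S.conn X (S.tang V))) (S.incl Y) := by
      rw [S.gauss X (S.tang V), S.gt_add_left, S.sff_normal, add_zero]
    rw [S.g_induced, ← hgauss, hsplit, gt_sub_left, hDV, hDnor]
    ring
  constructor
  · intro H X Y p
    have h1 := congrFun (H X Y) p
    have h2 := congrFun (key X Y) p
    have h3 := congrFun (key Y X) p
    rw [S.sff_symm Y X] at h3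
    have hgs := congrFun (S.g_symm X Y) p
    simp only [RiemannianSetting.IsEtaYamabeSoliton, RiemannianSetting.lieg,
      Pi.add_apply, Pi.smul_apply, Pi.mul_apply, Pi.sub_apply, smul_eq_mul] at h1 h2 h3
    linear_combination -h1 + h2/2 + h3/2 - (a p / 2) * hgs
  · intro H X Y
    funext p
    have h := H X Y p
    have h2 := congrFun (key X Y) p
    have h3 := congrFun (key Y X) p
    rw [S.sff_symm Y X] at h3
    have hgs := congrFun (S.g_symm X Y) p
    simp only [RiemannianSetting.lieg, Pi.add_apply, Pi.smul_apply, Pi.mul_apply,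
      Pi.sub_apply, smul_eq_mul] at h2 h3 ⊢
    linear_combination -h + h2/2 + h3/2 - (a p / 2) * hgs
end

section
/- Let M be an n-dimensional quasi-Einstein hypersurface isometrically immersed into an (n+1)-dimensional Riemannian manifold (M̃,g̃), whose Ricci tensor has the form Ric = α g + β η⊗η, let V be a concircular vector field on M̃ (∇̃_X V = a X), let η be the g-dual 1-form of the tangential component V^T, and assume ρ = g̃(N, V^⊥) is nowhere zero, where N is the unit normal of M. Then (M,g) is an almost η-Ricci soliton (V^T,λ,μ) if and only if M is a quasi-umbilical hypersurface whose second fundamental tensor satisfies H = ((λ − a − α)/ρ) g + ((μ − β)/ρ) η⊗η. -/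
/-- Abstract data of an `n`-dimensional hypersurface isometrically immersed into an
`(n+1)`-dimensional Riemannian manifold: a submanifold setting together with a unit
normal vector field `nrm`, the associated shape operator `shape`, and the codimension
one condition (the second fundamental form is proportional to the normal). -/
structure HypersurfaceSetting (n : ℕ) (M : Type) (VF W : Type)
    [AddCommGroup VF] [Module ℝ VF] [AddCommGroup W] [Module ℝ W] extends
    SubmanifoldSetting n M VF W where
  /-- the unit normal vector field `N` of the hypersurface -/
  nrm : W
  /-- the shape operator `B` -/
  shape : VF → VF
  nrm_unit : ∀ p, gt nrm nrm p = 1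
  nrm_normal : ∀ X, gt nrm (incl X) = 0
  /-- codimension one: `h(X,Y) = H(X,Y) N` -/
  sff_eq : ∀ X Y, sff X Y = fsmulW (gt (sff X Y) nrm) nrm
  /-- `g(BX, Y) = H(X,Y)` -/
  shape_eq : ∀ X Y, g (shape X) Y = gt (sff X Y) nrm

namespace HypersurfaceSetting

variable {n : ℕ} {M VF W : Type} [AddCommGroup VF] [Module ℝ VF]
  [AddCommGroup W] [Module ℝ W]

/-- the second fundamental tensor field `H(X,Y) = g̃(h(X,Y), N)` -/
def H (S : HypersurfaceSetting n M VF W) (X Y : VF) : M → ℝ := S.gt (S.sff X Y) S.nrm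

/-- `H²(X,Y) = g(BX, BY)` -/
def H2 (S : HypersurfaceSetting n M VF W) (X Y : VF) : M → ℝ :=
  S.g (S.shape X) (S.shape Y)

/-- the trace `tr(H)` of the second fundamental tensor field -/
def trH (S : HypersurfaceSetting n M VF W) (p : M) : ℝ :=
  ∑ i : Fin n, S.H (S.frame p i) (S.frame p i) p

/-- the trace `tr(H²)` -/
def trH2 (S : HypersurfaceSetting n M VF W) (p : M) : ℝ :=
  ∑ i : Fin n, S.H2 (S.frame p i) (S.frame p i) p

/-- `ρ = g̃(N, V^⊥)` -/
def rho (S : HypersurfaceSetting n M VF W) (V : W) (p : M) : ℝ :=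
  S.gt S.nrm (S.toSubmanifoldSetting.nor V) p

end HypersurfaceSetting

/-- Let `M` be an `n`-dimensional quasi-Einstein hypersurface
isometrically immersed into an `(n+1)`-dimensional Riemannian manifold `(M̃, g̃)`,
whose Ricci tensor has the form `Ric = α g + β η ⊗ η`, let `V` be a concircular
vector field on `M̃` (`∇̃_X V = a X`), let `η` be the `g`-dual `1`-form of the
tangential component `V^T`, and assume `ρ = g̃(N, V^⊥)` is nowhere zero, where `N`
is the unit normal of `M`.  Then `(M,g)` is an almost `η`-Ricci soliton
`(V^T, λ, μ)` if and only if `M` is a quasi-umbilical hypersurface whose second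
fundamental tensor satisfies
`H = ((λ − a − α)/ρ) g + ((μ − β)/ρ) η ⊗ η`. -/
theorem quasi_einstein_hypersurface_soliton_iff_quasi_umbilical
    {n : ℕ} {M VF W : Type} [AddCommGroup VF] [Module ℝ VF]
    [AddCommGroup W] [Module ℝ W]
    (S : HypersurfaceSetting n M VF W) (V : W) (lam mu a alpha beta : M → ℝ)
    (hconc : ∀ X : VF, S.Dconn X V = S.fsmulW a (S.incl X))
    (hric : ∀ X Y p, S.ric X Y p =
        alpha p * S.g X Y p
          + beta p * S.toRiemannianSetting.dual (S.tang V) X p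
              * S.toRiemannianSetting.dual (S.tang V) Y p)
    (hrho : ∀ p, S.rho V p ≠ 0) :
    S.toRiemannianSetting.IsEtaRicciSoliton (S.tang V) lam mu
        (S.toRiemannianSetting.dual (S.tang V)) ↔
      ∀ X Y p, S.H X Y p =
        ((lam p - a p - alpha p) / S.rho V p) * S.g X Y p
          + ((mu p - beta p) / S.rho V p)
              * S.toRiemannianSetting.dual (S.tang V) X p
              * S.toRiemannianSetting.dual (S.tang V) Y p := by
  classical
  -- abbreviations
  set T := S.tang V with hT
  have dd_zero : ∀ X : VF, S.dd X 0 = 0 := by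
    intro X
    have h := S.dd_add X 0 0
    rw [add_zero] at h
    exact (add_eq_right.mp h.symm)
  have gt_sub_left : ∀ u v w : W, S.gt (u - v) w = S.gt u w - S.gt v w := by
    intro u v w
    have h := S.gt_add_left (u - v) v w
    rw [sub_add_cancel] at h
    exact eq_sub_of_add_eq h.symm
  have gt_add_right : ∀ (u v w : W), S.gt u (v + w) = S.gt u v + S.gt u w := by
    intro u v w
    rw [S.gt_symm u (v + w), S.gt_add_left, S.gt_symm v u, S.gt_symm w u]
  have hH : ∀ X Y : VF, S.gt (S.sff X Y) (S.toSubmanifoldSetting.nor V)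
      = S.H X Y * S.rho V := by
    intro X Y
    rw [S.sff_eq X Y, S.gt_fsmul_left]
    rfl
  have hVsplit : S.incl T + S.toSubmanifoldSetting.nor V = V := by
    simp [SubmanifoldSetting.nor, hT]
  have key : ∀ X Y : VF, S.g (S.conn X T) Y = a * S.g X Y + S.rho V * S.H X Y := by
    intro X Y
    have h2 : S.Dconn X V = S.Dconn X (S.incl T) + S.Dconn X (S.toSubmanifoldSetting.nor V) := by
      rw [← S.Dconn_add, hVsplit]
    have h3 : S.gt (S.Dconn X V) (S.incl Y) = a * S.g X Y := by
      rw [hconc, S.gt_fsmul_left, S.g_induced]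
    have hz : S.gt (S.toSubmanifoldSetting.nor V) (S.incl Y) = 0 := S.tang_proj V Y
    have hz2 : S.gt (S.toSubmanifoldSetting.nor V) (S.incl (S.conn X Y)) = 0 :=
      S.tang_proj V (S.conn X Y)
    have hm := S.Dconn_metric X (S.toSubmanifoldSetting.nor V) (S.incl Y)
    rw [hz, dd_zero, S.gauss, gt_add_right, hz2, S.gt_symm _ (S.sff X Y), hH] at hm
    -- hm : 0 = gt (Dconn X (nor V)) (incl Y) + H X Y * rho V
    have h4 : S.gt (S.Dconn X (S.toSubmanifoldSetting.nor V)) (S.incl Y)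
        = -(S.H X Y * S.rho V) := by linear_combination -hm
    calc S.g (S.conn X T) Y = S.gt (S.incl (S.conn X T)) (S.incl Y) := S.g_induced _ _
      _ = S.gt (S.Dconn X (S.incl T) - S.sff X T) (S.incl Y) := by
            rw [S.gauss, add_sub_cancel_right]
      _ = S.gt (S.Dconn X (S.incl T)) (S.incl Y) - S.gt (S.sff X T) (S.incl Y) :=
            gt_sub_left _ _ _
      _ = S.gt (S.Dconn X (S.incl T)) (S.incl Y) := by rw [S.sff_normal]; ring
      _ = S.gt (S.Dconn X V) (S.incl Y)
            - S.gt (S.Dconn X (S.toSubmanifoldSetting.nor V)) (S.incl Y) := by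
            rw [h2, S.gt_add_left]; ring
      _ = a * S.g X Y + S.rho V * S.H X Y := by rw [h3, h4]; ring
  have Hsymm : ∀ X Y : VF, S.H X Y = S.H Y X := by
    intro X Y; unfold HypersurfaceSetting.H; rw [S.sff_symm]
  constructor
  · intro hs X Y p
    have h := congrFun (hs X Y) p
    simp only [RiemannianSetting.lieg, Pi.add_apply, Pi.smul_apply, Pi.mul_apply,
      smul_eq_mul] at h
    rw [congrFun (key X Y) p, congrFun (key Y X) p, hric X Y p] at h
    simp only [Pi.add_apply, Pi.mul_apply] at h
    rw [congrFun (S.g_symm Y X) p, congrFun (Hsymm Y X) p] at h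
    have hρ := hrho p
    field_simp
    linear_combination h
  · intro hq X Y
    funext p
    have h := hq X Y p
    have hρ := hrho p
    simp only [RiemannianSetting.IsEtaRicciSoliton, RiemannianSetting.lieg, Pi.add_apply,
      Pi.smul_apply, Pi.mul_apply, smul_eq_mul]
    rw [congrFun (key X Y) p, congrFun (key Y X) p, hric X Y p]
    simp only [Pi.add_apply, Pi.mul_apply]
    rw [congrFun (S.g_symm Y X) p, congrFun (Hsymm Y X) p]
    rw [h]
    field_simp
    ring
end
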